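/- Let (J, M) be a J-ternary superalgebra and define the endomorphisms ⟨a,b⟩ and ∂_{m,n} of J ⊕ M by ⟨a,b⟩(c) = a·(b·c) − (−1)^{|a||b|}b·(a·c), 4⟨a,b⟩(m) = a•(b•m) − (−1)^{|a||b|}b•(a•m), 2∂_{m,n}(a) = (−1)^{|a|(|m|+|n|)}(a•m)⋆n − (−1)^{|a||n|}m⋆(a•n), ∂_{m,n}(r) = ½(m⋆n)•r − (m,n,r). Then ∂_{m,n} is a superderivation of the operation ⋆, i.e., ∂_{m,n}(r⋆s) = ∂_{m,n}(r)⋆s + (−1)^{|r|(|m|+|n|)} r⋆∂_{m,n}(s) for all homogeneous r, s ∈ M. -/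

import Mathlib

/-- The Koszul sign `(-1)^{ij}` for parities `i j : ZMod 2`. -/
noncomputable def sg (i j : ZMod 2) : ℂ := (-1 : ℂ) ^ (i.val * j.val)

/-- A `J`-ternary superalgebra: a Jordan superalgebra `(J, cd)`, a special Jordan
`J`-supermodule `(M, bu)`, a super-anticommutative map `st : M⊗M → J` and an even
trilinear product `tp` on `M` satisfying the axioms SJT1–SJT6. -/
structure JTern {J M : Type} [AddCommGroup J] [Module ℂ J] [AddCommGroup M] [Module ℂ M]
    (grJ : ZMod 2 → Submodule ℂ J) (grM : ZMod 2 → Submodule ℂ M)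
    (cd : J →ₗ[ℂ] J →ₗ[ℂ] J) (bu : J →ₗ[ℂ] M →ₗ[ℂ] M)
    (st : M →ₗ[ℂ] M →ₗ[ℂ] J) (tp : M →ₗ[ℂ] M →ₗ[ℂ] M →ₗ[ℂ] M) : Prop where
  grade_cd : ∀ p q : ZMod 2, ∀ a ∈ grJ p, ∀ b ∈ grJ q, cd a b ∈ grJ (p + q)
  grade_bu : ∀ p q : ZMod 2, ∀ a ∈ grJ p, ∀ m ∈ grM q, bu a m ∈ grM (p + q)
  grade_st : ∀ p q : ZMod 2, ∀ m ∈ grM p, ∀ n ∈ grM q, st m n ∈ grJ (p + q)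
  grade_tp : ∀ p q r : ZMod 2, ∀ m ∈ grM p, ∀ n ∈ grM q, ∀ s ∈ grM r,
      tp m n s ∈ grM (p + q + r)
  comm : ∀ p q : ZMod 2, ∀ a ∈ grJ p, ∀ b ∈ grJ q, cd a b = sg p q • cd b a
  jordan : ∀ p q r s : ZMod 2, ∀ a ∈ grJ p, ∀ b ∈ grJ q, ∀ c ∈ grJ r, ∀ d ∈ grJ s,
      cd (cd a b) (cd c d) + sg q r • cd (cd a c) (cd b d)
        + (sg q s * sg r s) • cd (cd a d) (cd b c)
      = cd (cd (cd a b) c) d + (sg q r * sg q s * sg r s) • cd (cd (cd a d) c) b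
        + (sg p q * sg p r * sg p s * sg r s) • cd (cd (cd b d) c) a
  special : ∀ p q : ZMod 2, ∀ a ∈ grJ p, ∀ b ∈ grJ q, ∀ m : M,
      bu (cd a b) m = (2 : ℂ)⁻¹ • (bu a (bu b m) + sg p q • bu b (bu a m))
  st_anti : ∀ p q : ZMod 2, ∀ m ∈ grM p, ∀ n ∈ grM q, st m n = -(sg p q • st n m)
  sjt1 : ∀ p q r : ZMod 2, ∀ a ∈ grJ p, ∀ m ∈ grM q, ∀ n ∈ grM r,
      cd a (st m n) = (2 : ℂ)⁻¹ • (st (bu a m) n + sg p q • st m (bu a n))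
  sjt2 : ∀ p q r s : ZMod 2, ∀ a ∈ grJ p, ∀ m ∈ grM q, ∀ n ∈ grM r, ∀ t ∈ grM s,
      bu a (tp m n t) = tp (bu a m) n t - sg p q • tp m (bu a n) t
        + sg p (q + r) • tp m n (bu a t)
  sjt3 : ∀ p q r : ZMod 2, ∀ m ∈ grM p, ∀ n ∈ grM q, ∀ t ∈ grM r,
      tp m n t = (sg p (q + r) * sg q r) • tp t n m - sg q r • bu (st m t) n
  sjt4 : ∀ p q r : ZMod 2, ∀ m ∈ grM p, ∀ n ∈ grM q, ∀ t ∈ grM r,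
      tp m n t = sg p q • tp n m t + bu (st m n) t
  sjt5 : ∀ p q r s : ZMod 2, ∀ m ∈ grM p, ∀ n ∈ grM q, ∀ u ∈ grM r, ∀ t ∈ grM s,
      st (tp m n u) t + sg r (p + q) • st u (tp m n t)
        = sg q (r + s) • st m (bu (st u t) n)
  sjt6 : ∀ p q r s w : ZMod 2,
      ∀ m ∈ grM p, ∀ n ∈ grM q, ∀ u ∈ grM r, ∀ t ∈ grM s, ∀ v ∈ grM w,
      tp m n (tp u t v) = tp (tp m n u) t v
        + (sg r (p + q) * sg p q) • tp u (tp n m t) v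
        + sg (p + q) (r + s) • tp u t (tp m n v)


lemma sg_comm' (i j : ZMod 2) : sg i j = sg j i := by
  unfold sg; rw [mul_comm]

lemma sg_aux (p q r s : ZMod 2) :
    sg (p + q) (r + s) * sg (r + s) p = sg (r + s) q := by
  have h2 : ∀ x : ZMod 2, x = 0 ∨ x = 1 := by decide
  rcases h2 p with rfl | rfl <;> rcases h2 q with rfl | rfl <;> rcases h2 r with rfl | rfl <;> rcases h2 s with rfl | rfl <;>
    simp [sg, show ZMod.val ((1:ZMod 2)+1) = 0 by decide, show ZMod.val (2:ZMod 2) = 0 by decide, show ZMod.val (1:ZMod 2) = 1 by decide] <;> norm_num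

/-- In a `J`-ternary superalgebra, `∂_{m,n}` is a superderivation of the
operation `⋆` : `∂_{m,n}(r⋆s) = ∂_{m,n}(r)⋆s + (−1)^{|r|(|m|+|n|)} r⋆∂_{m,n}(s)`,
where on `J` one has `2∂_{m,n}(a) = (−1)^{|a|(|m|+|n|)}(a•m)⋆n − (−1)^{|a||n|}m⋆(a•n)`
and on `M`, `∂_{m,n}(r) = ½(m⋆n)•r − (m,n,r)`. -/
theorem jtern_partial_derives_star
    {J M : Type} [AddCommGroup J] [Module ℂ J] [AddCommGroup M] [Module ℂ M]
    (grJ : ZMod 2 → Submodule ℂ J) (grM : ZMod 2 → Submodule ℂ M)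
    (cd : J →ₗ[ℂ] J →ₗ[ℂ] J) (bu : J →ₗ[ℂ] M →ₗ[ℂ] M)
    (st : M →ₗ[ℂ] M →ₗ[ℂ] J) (tp : M →ₗ[ℂ] M →ₗ[ℂ] M →ₗ[ℂ] M)
    (h : JTern grJ grM cd bu st tp) :
    ∀ p q r s : ZMod 2, ∀ m ∈ grM p, ∀ n ∈ grM q, ∀ u ∈ grM r, ∀ t ∈ grM s,
      (2 : ℂ)⁻¹ •
          (sg (r + s) (p + q) • st (bu (st u t) m) n
            - sg (r + s) q • st m (bu (st u t) n))
        = st ((2 : ℂ)⁻¹ • bu (st m n) u - tp m n u) t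
          + sg r (p + q) • st u ((2 : ℂ)⁻¹ • bu (st m n) t - tp m n t) := by
  intro p q r s m hm n hn u hu t ht
  have hmn : st m n ∈ grJ (p + q) := h.grade_st p q m hm n hn
  have hut : st u t ∈ grJ (r + s) := h.grade_st r s u hu t ht
  have h1 := h.sjt1 (p + q) r s (st m n) hmn u hu t ht
  have h2 := h.sjt1 (r + s) p q (st u t) hut m hm n hn
  have h5 := h.sjt5 p q r s m hm n hn u hu t ht
  have hc := h.comm (p + q) (r + s) (st m n) hmn (st u t) hut
  have had' : (sg (p + q) (r + s) * sg (r + s) p) • (st m (bu (st u t) n))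
      = sg (r + s) q • (st m (bu (st u t) n)) := by rw [sg_aux p q r s]
  rw [sg_comm' r (p + q)] at h5 ⊢
  rw [sg_comm' q (r + s)] at h5
  rw [sg_comm' (r + s) (p + q)]
  simp only [map_sub, map_smul, LinearMap.sub_apply, LinearMap.smul_apply]
  linear_combination (norm := module) h1 - hc - sg (p + q) (r + s) • h2 + h5
    - (2 : ℂ)⁻¹ • had'
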